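/- arXiv:2412.17797 — 4 statements merged into one kernel-verified Lean document; each statement's English description precedes it below -/
import Mathlib

section
/- If a family of distributions P_a is strictly more informative (in the Blackwell sense) than its garbling P_b, then observing X_a (sampled from P_a given the state) yields strictly lower expected posterior entropy of the state than observing X_b = F(X_a): E_{X_a}[H(P(S | X_a))] < E_{X_b}[H(P(S | X_b))]. -/
open Real Finset

/-- Shannon entropy of a distribution on a finite type. -/
noncomputable def entropy {α : Type*} [Fintype α] (p : α → ℝ) : ℝ :=
  -∑ x, p x * Real.log (p x)

/-- Expected posterior entropy of the state `S ~ μ` after seeing an observation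
drawn from the kernel `K` applied to `S`. -/
noncomputable def expPostEntropy {S Ω : Type*} [Fintype S] [Fintype Ω]
    (μ : S → ℝ) (K : S → Ω → ℝ) : ℝ :=
  ∑ x, (∑ s, μ s * K s x) *
    entropy (fun s => μ s * K s x / (∑ s', μ s' * K s' x))

/-- A stochastic function (Markov kernel): nonnegative entries, rows summing to 1. -/
def IsKernel {Ω Ω' : Type*} [Fintype Ω'] (F : Ω → Ω' → ℝ) : Prop :=
  (∀ x x', 0 ≤ F x x') ∧ ∀ x, ∑ x', F x x' = 1

/-- Blackwell order: `Q` is at most as informative as `P` if `Q` is a garbling of `P`. -/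
def AtMostAsInformative {S Ω : Type*} [Fintype S] [Fintype Ω]
    (Q P : S → Ω → ℝ) : Prop :=
  ∃ F : Ω → Ω → ℝ, IsKernel F ∧ ∀ s x', Q s x' = ∑ x, P s x * F x x'

lemma gibbs_pt (a b : ℝ) (ha : 0 ≤ a) (hb : 0 ≤ b) (hab : 0 < a → 0 < b) :
    a - b ≤ a * (Real.log a - Real.log b) ∧
      (a * (Real.log a - Real.log b) = a - b → a = b) := by
  rcases ha.eq_or_lt with h0 | hpos
  · constructor
    · simp only [← h0, zero_sub, zero_mul]
      linarith
    · intro h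
      simp only [← h0, zero_mul, zero_sub] at h ⊢
      linarith
  · have hbpos := hab hpos
    have hlog : Real.log (b / a) ≤ b / a - 1 :=
      Real.log_le_sub_one_of_pos (div_pos hbpos hpos)
    have hlogeq : Real.log (b / a) = Real.log b - Real.log a :=
      Real.log_div hbpos.ne' hpos.ne'
    have hba : a * (b / a) = b := by field_simp
    constructor
    · nlinarith [hlog, hlogeq, hba, hpos]
    · intro heq
      by_contra hne
      have hba1 : b / a ≠ 1 := by
        intro h1
        apply hne
        rw [h1, mul_one] at hba
        exact hba
      have hstrict : Real.log (b / a) < b / a - 1 :=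
        Real.log_lt_sub_one_of_pos (div_pos hbpos hpos) hba1
      have h1 := mul_lt_mul_of_pos_left hstrict hpos
      rw [hlogeq] at h1
      nlinarith [h1, hba]

lemma gibbs_sum {ι : Type*} [Fintype ι] (u v : ι → ℝ) (hu : ∀ i, 0 ≤ u i)
    (hv : ∀ i, 0 ≤ v i) (hsum : ∑ i, u i = ∑ i, v i)
    (hsupp : ∀ i, 0 < u i → 0 < v i) :
    0 ≤ ∑ i, u i * (Real.log (u i) - Real.log (v i)) ∧
      (∑ i, u i * (Real.log (u i) - Real.log (v i)) = 0 → ∀ i, u i = v i) := by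
  have hpt := fun i => gibbs_pt (u i) (v i) (hu i) (hv i) (hsupp i)
  have hS : ∑ i, u i * (Real.log (u i) - Real.log (v i)) =
      ∑ i, (u i * (Real.log (u i) - Real.log (v i)) - (u i - v i)) := by
    rw [Finset.sum_sub_distrib, Finset.sum_sub_distrib, hsum]
    ring
  have hnn : ∀ i ∈ Finset.univ,
      0 ≤ u i * (Real.log (u i) - Real.log (v i)) - (u i - v i) :=
    fun i _ => by linarith [(hpt i).1]
  constructor
  · rw [hS]; exact Finset.sum_nonneg hnn
  · intro h0 i
    rw [hS] at h0
    have := (Finset.sum_eq_zero_iff_of_nonneg hnn).1 h0 i (Finset.mem_univ i)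
    exact (hpt i).2 (by linarith)

lemma expPostEntropy_eq {L Ω : Type*} [Fintype L] [Fintype Ω] (μ : L → ℝ) (K : L → Ω → ℝ)
    (h : ∀ s x, 0 ≤ μ s * K s x) :
    expPostEntropy μ K =
      -∑ x, ∑ s, μ s * K s x * Real.log (μ s * K s x / ∑ s', μ s' * K s' x) := by
  unfold expPostEntropy entropy
  have htrans : (∑ x, -(∑ s, μ s * K s x * Real.log (μ s * K s x / ∑ s', μ s' * K s' x)))
      = -∑ x, ∑ s, μ s * K s x * Real.log (μ s * K s x / ∑ s', μ s' * K s' x) :=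
    Finset.sum_neg_distrib _
  rw [← htrans]
  refine Finset.sum_congr rfl fun x _ => ?_
  rcases eq_or_ne (∑ s', μ s' * K s' x) 0 with hp | hp
  · have hz : ∀ s ∈ Finset.univ, μ s * K s x = 0 :=
      (Finset.sum_eq_zero_iff_of_nonneg (fun s _ => h s x)).1 hp
    rw [hp, zero_mul]
    have hz2 : ∑ s, μ s * K s x * Real.log (μ s * K s x / (0:ℝ)) = 0 :=
      Finset.sum_eq_zero fun s _ => by rw [hz s (Finset.mem_univ s)]; ring
    rw [hz2, neg_zero]
  · rw [mul_neg, Finset.mul_sum]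
    congr 1
    refine Finset.sum_congr rfl fun s _ => ?_
    rw [← mul_assoc, mul_comm (∑ s', μ s' * K s' x) (μ s * K s x / _),
      div_mul_cancel₀ _ hp]

lemma core_gibbs {L Ω : Type*} [Fintype L] [Fintype Ω]
    (Q R : L → Ω → ℝ) (PA PB : Ω → ℝ) (F : Ω → Ω → ℝ)
    (hQNN : ∀ s x, 0 ≤ Q s x) (hFNN : ∀ x x', 0 ≤ F x x')
    (hFSum : ∀ x, ∑ x', F x x' = 1)
    (hR : ∀ s x', R s x' = ∑ x, Q s x * F x x')
    (hPA : ∀ x, PA x = ∑ s, Q s x) (hPB : ∀ x', PB x' = ∑ s, R s x') :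
    (∑ x', ∑ s, R s x' * Real.log (R s x' / PB x')) ≤
        ∑ x, ∑ s, Q s x * Real.log (Q s x / PA x) ∧
      ((∑ x', ∑ s, R s x' * Real.log (R s x' / PB x')) =
          (∑ x, ∑ s, Q s x * Real.log (Q s x / PA x)) →
        ∀ s x x', Q s x * F x x' = R s x' / PB x' * (PA x * F x x')) := by
  have hRNN : ∀ s x', 0 ≤ R s x' := fun s x' => by
    rw [hR]; exact Finset.sum_nonneg fun x _ => mul_nonneg (hQNN s x) (hFNN x x')
  have hPANN : ∀ x, 0 ≤ PA x := fun x => by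
    rw [hPA]; exact Finset.sum_nonneg fun s _ => hQNN s x
  have hPBNN : ∀ x', 0 ≤ PB x' := fun x' => by
    rw [hPB]; exact Finset.sum_nonneg fun s _ => hRNN s x'
  have hQlePA : ∀ s x, Q s x ≤ PA x := fun s x => by
    rw [hPA]
    exact Finset.single_le_sum (fun s' _ => hQNN s' x) (Finset.mem_univ s)
  have hRlePB : ∀ s x', R s x' ≤ PB x' := fun s x' => by
    rw [hPB]
    exact Finset.single_le_sum (fun s' _ => hRNN s' x') (Finset.mem_univ s)
  have hPBeq : ∀ x', PB x' = ∑ x, PA x * F x x' := by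
    intro x'
    rw [hPB]
    simp only [hR]
    rw [Finset.sum_comm]
    exact Finset.sum_congr rfl fun x _ => by rw [hPA, Finset.sum_mul]
  have hwlePB : ∀ x x', PA x * F x x' ≤ PB x' := fun x x' => by
    rw [hPBeq]
    exact Finset.single_le_sum
      (fun x'' _ => mul_nonneg (hPANN x'') (hFNN x'' x')) (Finset.mem_univ x)
  -- per-pair Gibbs
  have hpair : ∀ x x',
      0 ≤ (∑ s, Q s x * F x x' *
          (Real.log (Q s x / PA x) - Real.log (R s x' / PB x'))) ∧
        ((∑ s, Q s x * F x x' *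
            (Real.log (Q s x / PA x) - Real.log (R s x' / PB x'))) = 0 →
          ∀ s, Q s x * F x x' = R s x' / PB x' * (PA x * F x x')) := by
    intro x x'
    have hu : ∀ s, 0 ≤ Q s x * F x x' := fun s => mul_nonneg (hQNN s x) (hFNN x x')
    have hv : ∀ s, 0 ≤ R s x' / PB x' * (PA x * F x x') := fun s =>
      mul_nonneg (div_nonneg (hRNN s x') (hPBNN x'))
        (mul_nonneg (hPANN x) (hFNN x x'))
    have husum : ∑ s, Q s x * F x x' = PA x * F x x' := by
      rw [hPA, Finset.sum_mul]
    have hsum : ∑ s, Q s x * F x x' = ∑ s, R s x' / PB x' * (PA x * F x x') := by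
      rcases eq_or_ne (PB x') 0 with hz | hz
      · have hw : PA x * F x x' = 0 :=
          le_antisymm (hz ▸ hwlePB x x') (mul_nonneg (hPANN x) (hFNN x x'))
        rw [husum, hw]
        simp
      · rw [husum, ← Finset.sum_mul, ← Finset.sum_div, ← hPB, div_self hz, one_mul]
    have hsupp : ∀ s, 0 < Q s x * F x x' → 0 < R s x' / PB x' * (PA x * F x x') := by
      intro s hpos
      have hQpos : 0 < Q s x := by
        rcases (hQNN s x).eq_or_lt with h | h
        · rw [← h, zero_mul] at hpos; exact absurd hpos (lt_irrefl 0)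
        · exact h
      have hFpos : 0 < F x x' := by
        rcases (hFNN x x').eq_or_lt with h | h
        · rw [← h, mul_zero] at hpos; exact absurd hpos (lt_irrefl 0)
        · exact h
      have hRpos : 0 < R s x' := lt_of_lt_of_le hpos (by
        rw [hR]
        exact Finset.single_le_sum
          (fun x'' _ => mul_nonneg (hQNN s x'') (hFNN x'' x')) (Finset.mem_univ x))
      have hPBpos : 0 < PB x' := lt_of_lt_of_le hRpos (hRlePB s x')
      have hPApos : 0 < PA x := lt_of_lt_of_le hQpos (hQlePA s x)
      exact mul_pos (div_pos hRpos hPBpos) (mul_pos hPApos hFpos)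
    have htr : ∀ s, Q s x * F x x' *
        (Real.log (Q s x * F x x') - Real.log (R s x' / PB x' * (PA x * F x x'))) =
        Q s x * F x x' * (Real.log (Q s x / PA x) - Real.log (R s x' / PB x')) := by
      intro s
      rcases (hu s).eq_or_lt with h | h
      · rw [← h, zero_mul, zero_mul]
      · have hQpos : 0 < Q s x := by
          rcases (hQNN s x).eq_or_lt with h2 | h2
          · rw [← h2, zero_mul] at h; exact absurd h (lt_irrefl 0)
          · exact h2
        have hFpos : 0 < F x x' := by
          rcases (hFNN x x').eq_or_lt with h2 | h2
          · rw [← h2, mul_zero] at h; exact absurd h (lt_irrefl 0)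
          · exact h2
        have hRpos : 0 < R s x' := lt_of_lt_of_le h (by
          rw [hR]
          exact Finset.single_le_sum
            (fun x'' _ => mul_nonneg (hQNN s x'') (hFNN x'' x')) (Finset.mem_univ x))
        have hPBpos : 0 < PB x' := lt_of_lt_of_le hRpos (hRlePB s x')
        have hPApos : 0 < PA x := lt_of_lt_of_le hQpos (hQlePA s x)
        rw [Real.log_mul hQpos.ne' hFpos.ne',
          Real.log_mul (div_pos hRpos hPBpos).ne' (mul_pos hPApos hFpos).ne',
          Real.log_div hRpos.ne' hPBpos.ne', Real.log_mul hPApos.ne' hFpos.ne',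
          Real.log_div hQpos.ne' hPApos.ne']
        ring
    have hg := gibbs_sum (fun s => Q s x * F x x')
      (fun s => R s x' / PB x' * (PA x * F x x')) hu hv hsum hsupp
    constructor
    · have := hg.1
      calc (0:ℝ) ≤ ∑ s, Q s x * F x x' *
            (Real.log (Q s x * F x x') - Real.log (R s x' / PB x' * (PA x * F x x'))) := this
        _ = _ := Finset.sum_congr rfl fun s _ => htr s
    · intro h0 s
      apply hg.2
      show (∑ s, Q s x * F x x' * (Real.log (Q s x * F x x') -
        Real.log (R s x' / PB x' * (PA x * F x x')))) = 0
      rw [Finset.sum_congr rfl fun s _ => htr s, h0]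
  -- global rearrangement
  have hGap : (∑ x, ∑ s, Q s x * Real.log (Q s x / PA x)) -
      (∑ x', ∑ s, R s x' * Real.log (R s x' / PB x')) =
      ∑ x, ∑ x', ∑ s, Q s x * F x x' *
        (Real.log (Q s x / PA x) - Real.log (R s x' / PB x')) := by
    have h1 : ∀ x, ∑ x', ∑ s, Q s x * F x x' * Real.log (Q s x / PA x) =
        ∑ s, Q s x * Real.log (Q s x / PA x) := by
      intro x
      rw [Finset.sum_comm]
      refine Finset.sum_congr rfl fun s _ => ?_
      have : ∀ x', Q s x * F x x' * Real.log (Q s x / PA x) =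
          Q s x * Real.log (Q s x / PA x) * F x x' := fun x' => by ring
      rw [Finset.sum_congr rfl fun x' _ => this x', ← Finset.mul_sum, hFSum, mul_one]
    have h2 : ∑ x, ∑ x', ∑ s, Q s x * F x x' * Real.log (R s x' / PB x') =
        ∑ x', ∑ s, R s x' * Real.log (R s x' / PB x') := by
      rw [Finset.sum_comm]
      refine Finset.sum_congr rfl fun x' _ => ?_
      rw [Finset.sum_comm]
      refine Finset.sum_congr rfl fun s _ => ?_
      rw [hR, Finset.sum_mul]
    simp only [mul_sub, Finset.sum_sub_distrib]
    rw [h2, Finset.sum_congr rfl fun x _ =>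
      Finset.sum_congr rfl fun x' _ => rfl]
    congr 1
    exact (Finset.sum_congr rfl fun x _ => (h1 x).symm)
  constructor
  · have hnn : 0 ≤ ∑ x, ∑ x', ∑ s, Q s x * F x x' *
        (Real.log (Q s x / PA x) - Real.log (R s x' / PB x')) :=
      Finset.sum_nonneg fun x _ => Finset.sum_nonneg fun x' _ => (hpair x x').1
    linarith [hGap ▸ hnn]
  · intro heq s x x'
    have h0 : ∑ x, ∑ x', ∑ s, Q s x * F x x' *
        (Real.log (Q s x / PA x) - Real.log (R s x' / PB x')) = 0 := by
      rw [← hGap, heq]; ring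
    have hx := (Finset.sum_eq_zero_iff_of_nonneg
      (fun x _ => Finset.sum_nonneg fun x' _ => (hpair x x').1)).1 h0 x (Finset.mem_univ x)
    have hxx := (Finset.sum_eq_zero_iff_of_nonneg
      (fun x' _ => (hpair x x').1)).1 hx x' (Finset.mem_univ x')
    exact (hpair x x').2 hxx s

/-- If `Pa` is strictly more informative than its garbling `Pb = F ∘ Pa`
(witnessed by the garbling kernel `F`, with `Pa` not itself a garbling of `Pb`),
then observing from `Pa` yields strictly lower expected posterior entropy of the
full-support state `S ~ μ` than observing from `Pb`. -/
theorem strictly_more_informative_lower_entropy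
    {L Ω : Type*} [Fintype L] [Fintype Ω]
    (μ : L → ℝ) (hμpos : ∀ s, 0 < μ s) (hμ : ∑ s, μ s = 1)
    (Pa Pb : L → Ω → ℝ)
    (hPa : ∀ s, IsKernel (fun (_ : Unit) (x : Ω) => Pa s x))
    (F : Ω → Ω → ℝ) (hFker : IsKernel F)
    (hgarble : ∀ s x', Pb s x' = ∑ x, Pa s x * F x x')
    (hstrict : ¬ AtMostAsInformative Pa Pb) :
    expPostEntropy μ Pa < expPostEntropy μ Pb := by
  obtain ⟨hFNN, hFSum⟩ := hFker
  have hPaNN : ∀ s x, 0 ≤ Pa s x := fun s x => (hPa s).1 () x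
  have hPaSum : ∀ s, ∑ x, Pa s x = 1 := fun s => (hPa s).2 ()
  have hPbNN : ∀ s x', 0 ≤ Pb s x' := fun s x' => by
    rw [hgarble]
    exact Finset.sum_nonneg fun x _ => mul_nonneg (hPaNN s x) (hFNN x x')
  have hqNN : ∀ s x, 0 ≤ μ s * Pa s x := fun s x =>
    mul_nonneg (hμpos s).le (hPaNN s x)
  have hrNN : ∀ s x', 0 ≤ μ s * Pb s x' := fun s x' =>
    mul_nonneg (hμpos s).le (hPbNN s x')
  have hR : ∀ s x', μ s * Pb s x' = ∑ x, (μ s * Pa s x) * F x x' := by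
    intro s x'
    rw [hgarble, Finset.mul_sum]
    exact Finset.sum_congr rfl fun x _ => by ring
  have hcore := core_gibbs (fun s x => μ s * Pa s x) (fun s x' => μ s * Pb s x')
    (fun x => ∑ s, μ s * Pa s x) (fun x' => ∑ s, μ s * Pb s x') F
    hqNN hFNN hFSum hR (fun x => rfl) (fun x' => rfl)
  beta_reduce at hcore
  have EA := expPostEntropy_eq μ Pa hqNN
  have EB := expPostEntropy_eq μ Pb hrNN
  rw [EA, EB, neg_lt_neg_iff]
  refine lt_of_le_of_ne hcore.1 fun heq => hstrict ?_
  have key := hcore.2 heq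
  -- key : ∀ s x x', μ s * Pa s x * F x x'
  --     = μ s * Pb s x' / PB x' * (PA x * F x x')
  have hPBeq : ∀ x', (∑ s, μ s * Pb s x') = ∑ x, (∑ s, μ s * Pa s x) * F x x' := by
    intro x'
    simp only [hR]
    rw [Finset.sum_comm]
    exact Finset.sum_congr rfl fun x _ => by rw [Finset.sum_mul]
  have hPAsum1 : ∑ x, ∑ s, μ s * Pa s x = 1 := by
    rw [Finset.sum_comm]
    calc ∑ s, ∑ x, μ s * Pa s x = ∑ s, μ s * ∑ x, Pa s x :=
          Finset.sum_congr rfl fun s _ => (Finset.mul_sum _ _ _).symm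
      _ = ∑ s, μ s := Finset.sum_congr rfl fun s _ => by rw [hPaSum, mul_one]
      _ = 1 := hμ
  refine ⟨fun x' x => if (∑ s, μ s * Pb s x') = 0 then ∑ s, μ s * Pa s x
    else (∑ s, μ s * Pa s x) * F x x' / (∑ s, μ s * Pb s x'), ⟨?_, ?_⟩, ?_⟩
  · intro x' x
    beta_reduce
    split_ifs
    · exact Finset.sum_nonneg fun s _ => hqNN s x
    · exact div_nonneg (mul_nonneg (Finset.sum_nonneg fun s _ => hqNN s x)
        (hFNN x x')) (Finset.sum_nonneg fun s _ => hrNN s x')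
  · intro x'
    rcases eq_or_ne (∑ s, μ s * Pb s x') 0 with hz | hz
    · simp only [hz, if_pos rfl]
      exact hPAsum1
    · simp only [if_neg hz]
      rw [← Finset.sum_div, ← hPBeq, div_self hz]
  · intro s x
    have hterm : ∀ x', Pb s x' *
        (if (∑ s, μ s * Pb s x') = 0 then ∑ s, μ s * Pa s x
          else (∑ s, μ s * Pa s x) * F x x' / (∑ s, μ s * Pb s x')) =
        Pa s x * F x x' := by
      intro x'
      rcases eq_or_ne (∑ s', μ s' * Pb s' x') 0 with hz | hz
      · have hPb0 : Pb s x' = 0 := by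
          have := (Finset.sum_eq_zero_iff_of_nonneg
            (fun s' _ => hrNN s' x')).1 hz s (Finset.mem_univ s)
          rcases mul_eq_zero.1 this with h | h
          · exact absurd h (hμpos s).ne'
          · exact h
        have hk := key s x x'
        rw [hz, div_zero, zero_mul] at hk
        have hPaF : Pa s x * F x x' = 0 := by
          rcases mul_eq_zero.1 (by linarith [hk] : μ s * Pa s x * F x x' = 0) with h | h
          · rcases mul_eq_zero.1 h with h2 | h2
            · exact absurd h2 (hμpos s).ne'
            · rw [h2, zero_mul]
          · rw [h, mul_zero]
        rw [hPb0, zero_mul, hPaF]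
      · rw [if_neg hz]
        have hk := key s x x'
        have hμne := (hμpos s).ne'
        apply mul_left_cancel₀ hμne
        calc μ s * (Pb s x' * ((∑ s, μ s * Pa s x) * F x x' / ∑ s', μ s' * Pb s' x'))
            = μ s * Pb s x' / (∑ s', μ s' * Pb s' x') *
              ((∑ s, μ s * Pa s x) * F x x') := by ring
          _ = μ s * Pa s x * F x x' := hk.symm
          _ = μ s * (Pa s x * F x x') := by ring
    calc Pa s x = Pa s x * ∑ x', F x x' := by rw [hFSum, mul_one]
      _ = ∑ x', Pa s x * F x x' := Finset.mul_sum _ _ _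
      _ = ∑ x', Pb s x' * _ := (Finset.sum_congr rfl fun x' _ => (hterm x').symm)
end

section
/- If X_a and S are conditionally independent given X_b (where X_a ~ P_a(·|S) and X_b = F(X_a) for a garbling F witnessing that P_b is at most as informative as P_a), then P_b is at least as informative as P_a. That is, there exists a stochastic kernel mapping X_b-samples to X_a-samples such that for each state s, applying it to P_b(·|s) yields P_a(·|s). -/
open Real Finset

/-- If `X_a` and `S` are conditionally independent given `X_b` (where
`X_a ~ Pa(·|S)` and `X_b = F(X_a)` for a garbling `F` with `Pb = F ∘ Pa`), then
`Pb` is at least as informative as `Pa`: there is a kernel `G` with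
`G(X_b) ~ Pa(·|s)` whenever `X_b ~ Pb(·|s)`, for every state `s`. -/
theorem cond_indep_implies_reverse_garbling
    {L Ω : Type*} [Fintype L] [Fintype Ω]
    (μ : L → ℝ) (hμpos : ∀ s, 0 < μ s) (hμ : ∑ s, μ s = 1)
    (Pa Pb : L → Ω → ℝ)
    (hPann : ∀ s x, 0 ≤ Pa s x) (hPasum : ∀ s, ∑ x, Pa s x = 1)
    (F : Ω → Ω → ℝ) (hFker : IsKernel F)
    (hgarble : ∀ s x', Pb s x' = ∑ x, Pa s x * F x x')
    -- conditional independence of `X_a` and `S` given `X_b`: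
    -- `P(s, x_a, x_b) ⬝ P(x_b) = P(s, x_b) ⬝ P(x_a, x_b)`
    (hCI : ∀ (s : L) (xa xb : Ω),
      (μ s * Pa s xa * F xa xb) * (∑ s', ∑ xa', μ s' * Pa s' xa' * F xa' xb) =
        (μ s * ∑ xa', Pa s xa' * F xa' xb) *
          (∑ s', μ s' * Pa s' xa * F xa xb)) :
    ∃ G : Ω → Ω → ℝ, IsKernel G ∧ ∀ s xa, Pa s xa = ∑ xb, Pb s xb * G xb xa := by
  classical
  -- L is nonempty
  have hLne : Nonempty L := by
    by_contra h
    rw [not_nonempty_iff] at h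
    simp [Finset.sum_empty] at hμ
  obtain ⟨s₀⟩ := hLne
  -- Ω is nonempty
  have hΩne : Nonempty Ω := by
    by_contra h
    rw [not_nonempty_iff] at h
    have := hPasum s₀
    simp at this
  have hcard : (0 : ℝ) < (Fintype.card Ω : ℝ) := by
    exact_mod_cast Fintype.card_pos
  set D : Ω → ℝ := fun xb => ∑ s', ∑ xa', μ s' * Pa s' xa' * F xa' xb with hD
  set N : Ω → Ω → ℝ := fun xa xb => ∑ s', μ s' * Pa s' xa * F xa xb with hN
  have hFnn := hFker.1
  have hterm_nn : ∀ (s : L) (xa xb : Ω), 0 ≤ μ s * Pa s xa * F xa xb := fun s xa xb =>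
    mul_nonneg (mul_nonneg (hμpos s).le (hPann s xa)) (hFnn xa xb)
  have hNnn : ∀ xa xb, 0 ≤ N xa xb := fun xa xb =>
    Finset.sum_nonneg fun s _ => hterm_nn s xa xb
  have hDnn : ∀ xb, 0 ≤ D xb := fun xb =>
    Finset.sum_nonneg fun s _ => Finset.sum_nonneg fun xa _ => hterm_nn s xa xb
  have hDN : ∀ xb, D xb = ∑ xa, N xa xb := fun xb => Finset.sum_comm
  -- if D xb = 0 then all terms vanish
  have hzero : ∀ xb, D xb = 0 → ∀ s xa, Pa s xa * F xa xb = 0 := by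
    intro xb h0 s xa
    have h1 : ∀ s' ∈ Finset.univ, (0:ℝ) ≤ ∑ xa', μ s' * Pa s' xa' * F xa' xb :=
      fun s' _ => Finset.sum_nonneg fun xa' _ => hterm_nn s' xa' xb
    have h2 := (Finset.sum_eq_zero_iff_of_nonneg h1).mp h0 s (Finset.mem_univ s)
    have h3 := (Finset.sum_eq_zero_iff_of_nonneg
      (fun xa' _ => hterm_nn s xa' xb)).mp h2 xa (Finset.mem_univ xa)
    have hμne : μ s ≠ 0 := (hμpos s).ne'
    have : μ s * (Pa s xa * F xa xb) = 0 := by ring_nf; ring_nf at h3; exact h3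
    exact (mul_eq_zero.mp this).resolve_left hμne
  -- define G
  refine ⟨fun xb xa => if D xb = 0 then (Fintype.card Ω : ℝ)⁻¹ else N xa xb / D xb,
    ⟨?_, ?_⟩, ?_⟩
  · intro xb xa
    by_cases h : D xb = 0
    · simp [h, hcard.le, inv_nonneg]
    · simp only [h, if_false]
      exact div_nonneg (hNnn xa xb) (hDnn xb)
  · intro xb
    by_cases h : D xb = 0
    · simp [h, Finset.sum_const, Finset.card_univ, mul_inv_cancel₀ hcard.ne']
    · simp only [h, if_false]
      rw [← Finset.sum_div, ← hDN xb, div_self h]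
  · intro s xa
    have key : ∀ xb, Pb s xb * (if D xb = 0 then (Fintype.card Ω : ℝ)⁻¹ else N xa xb / D xb)
        = Pa s xa * F xa xb := by
      intro xb
      by_cases h : D xb = 0
      · have hPb : Pb s xb = 0 := by
          rw [hgarble s xb]
          exact Finset.sum_eq_zero fun x _ => hzero xb h s x
        rw [hPb, hzero xb h s xa, zero_mul]
      · simp only [h, if_false]
        have hCI' := hCI s xa xb
        rw [← hgarble s xb] at hCI'
        -- hCI' : (μ s * Pa s xa * F xa xb) * D xb = (μ s * Pb s xb) * N xa xb
        have hμne : μ s ≠ 0 := (hμpos s).ne'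
        have h2 : Pa s xa * F xa xb * D xb = Pb s xb * N xa xb := by
          apply mul_left_cancel₀ hμne
          have : μ s * (Pa s xa * F xa xb * D xb) = (μ s * Pa s xa * F xa xb) * D xb := by ring
          rw [this, hCI']
          ring
        field_simp
        linarith [h2]
    symm
    calc ∑ xb, Pb s xb * (if D xb = 0 then (Fintype.card Ω : ℝ)⁻¹ else N xa xb / D xb)
        = ∑ xb, Pa s xa * F xa xb := Finset.sum_congr rfl fun xb _ => key xb
      _ = Pa s xa * ∑ xb, F xa xb := by rw [Finset.mul_sum]
      _ = Pa s xa := by rw [hFker.2 xa, mul_one]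
end

section
/- For sufficiently small positive β, the Boltzmann-rational expected utility without a signal is at most the Boltzmann-rational expected utility with the signal. Precisely: given y_{s,a} (s ∈ {0,1,...,k}, a ∈ {1,...,n}) and probabilities p_s with ∑_s p_s y_{s,a} = y_{0,a} for all a, there exists β₀ > 0 such that for all 0 < β < β₀: (∑_a exp(β y_{0,a}) y_{0,a}) / (∑_a exp(β y_{0,a})) ≤ ∑_{s=1}^k p_s (∑_a exp(β y_{s,a}) y_{s,a}) / (∑_a exp(β y_{s,a})). -/
open Real Finset

private lemma sum_exp_pos {n : ℕ} (hn : 0 < n) (β : ℝ) (v : Fin n → ℝ) :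
    0 < ∑ a, Real.exp (β * v a) := by
  have : Nonempty (Fin n) := ⟨⟨0, hn⟩⟩
  exact Finset.sum_pos (fun a _ => Real.exp_pos _) Finset.univ_nonempty

private lemma hasDerivAt_D {n : ℕ} (v : Fin n → ℝ) (β : ℝ) :
    HasDerivAt (fun β : ℝ => ∑ a, Real.exp (β * v a))
      (∑ a, Real.exp (β * v a) * v a) β :=
  HasDerivAt.fun_sum fun a _ => ((hasDerivAt_mul_const (v a)).exp)

private lemma hasDerivAt_N {n : ℕ} (v : Fin n → ℝ) (β : ℝ) :
    HasDerivAt (fun β : ℝ => ∑ a, Real.exp (β * v a) * v a)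
      (∑ a, (Real.exp (β * v a) * v a) * v a) β :=
  HasDerivAt.fun_sum fun a _ => ((hasDerivAt_mul_const (v a)).exp).mul_const (v a)

/-- the second-order coefficient: `n`-times-variance of `v`. -/
private def qf {n : ℕ} (v : Fin n → ℝ) : ℝ :=
  (∑ a, v a * v a) * n - (∑ a, v a) * (∑ a, v a)

private lemma hasDerivAt_F0 {n : ℕ} (hn : 0 < n) (v : Fin n → ℝ) :
    HasDerivAt (fun β : ℝ => (∑ a, Real.exp (β * v a) * v a) / (∑ a, Real.exp (β * v a)))
      (qf v / (n : ℝ) ^ 2) 0 := by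
  have h := (hasDerivAt_N v 0).div (hasDerivAt_D v 0) (sum_exp_pos hn 0 v).ne'
  convert h using 1
  · rfl
  · rfl
  · rfl
  simp [qf, Finset.card_univ]

private lemma F_shift {n : ℕ} (hn : 0 < n) (v : Fin n → ℝ) (c β : ℝ) :
    (∑ a, Real.exp (β * (v a + c)) * (v a + c)) / (∑ a, Real.exp (β * (v a + c)))
      = (∑ a, Real.exp (β * v a) * v a) / (∑ a, Real.exp (β * v a)) + c := by
  have hE : ∀ a, Real.exp (β * (v a + c)) = Real.exp (β * c) * Real.exp (β * v a) := by
    intro a; rw [← Real.exp_add]; ring_nf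
  have hD := (sum_exp_pos hn β v).ne'
  have hec := (Real.exp_pos (β * c)).ne'
  have h1 : (∑ a, Real.exp (β * (v a + c)) * (v a + c))
      = Real.exp (β * c) * ((∑ a, Real.exp (β * v a) * v a)
          + c * ∑ a, Real.exp (β * v a)) := by
    have e : ∀ a ∈ univ, Real.exp (β * (v a + c)) * (v a + c)
        = Real.exp (β * c) * (Real.exp (β * v a) * v a)
          + Real.exp (β * c) * (c * Real.exp (β * v a)) := fun a _ => by rw [hE a]; ring
    rw [Finset.sum_congr rfl e, Finset.sum_add_distrib, ← Finset.mul_sum,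
      ← Finset.mul_sum, ← Finset.mul_sum, mul_add]
  have h2 : (∑ a, Real.exp (β * (v a + c))) = Real.exp (β * c) * ∑ a, Real.exp (β * v a) := by
    rw [Finset.mul_sum]
    exact Finset.sum_congr rfl fun a _ => hE a
  rw [h1, h2, mul_div_mul_left _ _ hec, add_div, mul_div_assoc, div_self hD, mul_one]

private lemma var_eq {k : ℕ} (p x : Fin k → ℝ) (hpsum : ∑ s, p s = 1) :
    ∑ s, p s * (x s - ∑ t, p t * x t) ^ 2
      = ∑ s, p s * x s ^ 2 - (∑ s, p s * x s) ^ 2 := by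
  set m := ∑ t, p t * x t with hm
  have e : ∀ s ∈ univ, p s * (x s - m) ^ 2
      = p s * x s ^ 2 - 2 * m * (p s * x s) + m ^ 2 * p s := fun s _ => by ring
  rw [Finset.sum_congr rfl e, Finset.sum_add_distrib, Finset.sum_sub_distrib,
    ← Finset.mul_sum, ← Finset.mul_sum, hpsum, ← hm]
  ring

private lemma q_pair {n : ℕ} (v : Fin n → ℝ) :
    ∑ a, ∑ b, (v a - v b) ^ 2 = 2 * qf v := by
  have inner : ∀ a ∈ univ, ∑ b, (v a - v b) ^ 2
      = (n : ℝ) * (v a * v a) - 2 * v a * (∑ b, v b) + ∑ b, v b * v b := by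
    intro a _
    have e : ∀ b ∈ univ, (v a - v b) ^ 2
        = v a * v a - 2 * v a * v b + v b * v b := fun b _ => by ring
    rw [Finset.sum_congr rfl e, Finset.sum_add_distrib, Finset.sum_sub_distrib,
      Finset.sum_const, ← Finset.mul_sum]
    simp [Finset.card_univ, nsmul_eq_mul]
  rw [Finset.sum_congr rfl inner, Finset.sum_add_distrib, Finset.sum_sub_distrib,
    Finset.sum_const, ← Finset.mul_sum]
  have e2 : ∑ a, 2 * v a * (∑ b, v b) = 2 * (∑ a, v a) * (∑ b, v b) := by
    rw [← Finset.sum_mul, ← Finset.mul_sum]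
  rw [e2]
  simp only [Finset.card_univ, Fintype.card_fin, nsmul_eq_mul, qf]
  ring

/-- For all sufficiently small positive `β`, the Boltzmann-rational expected
utility without the signal is at most the one with the signal. -/
theorem small_beta_signal_helps
    {n k : ℕ} (hn : 0 < n) (hk : 0 < k)
    (p : Fin k → ℝ) (hp : ∀ s, 0 ≤ p s) (hpsum : ∑ s, p s = 1)
    (y : Fin k → Fin n → ℝ) (y0 : Fin n → ℝ)
    (hy0 : ∀ a, y0 a = ∑ s, p s * y s a) :
    ∃ β₀ > (0 : ℝ), ∀ β : ℝ, 0 < β → β < β₀ →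
      (∑ a, Real.exp (β * y0 a) * y0 a) / (∑ a, Real.exp (β * y0 a)) ≤
        ∑ s, p s *
          ((∑ a, Real.exp (β * y s a) * y s a) / (∑ a, Real.exp (β * y s a))) := by
  have a0 : Fin n := ⟨0, hn⟩
  by_cases hA : ∀ s, ∀ a, p s = 0 ∨ y s a - y0 a = y s a0 - y0 a0
  · -- degenerate case: every signal value vector is a constant shift of `y0`; equality holds
    refine ⟨1, one_pos, fun β hβ _ => ?_⟩
    have key : ∀ s ∈ univ,
        p s * ((∑ a, Real.exp (β * y s a) * y s a) / (∑ a, Real.exp (β * y s a)))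
          = p s * ((∑ a, Real.exp (β * y0 a) * y0 a) / (∑ a, Real.exp (β * y0 a))
              + (y s a0 - y0 a0)) := by
      intro s _
      rcases eq_or_ne (p s) 0 with h | h
      · simp [h]
      · have hc : ∀ a, y s a = y0 a + (y s a0 - y0 a0) := by
          intro a
          have := (hA s a).resolve_left h
          linarith
        congr 1
        calc (∑ a, Real.exp (β * y s a) * y s a) / (∑ a, Real.exp (β * y s a))
            = (∑ a, Real.exp (β * (y0 a + (y s a0 - y0 a0))) * (y0 a + (y s a0 - y0 a0)))
                / (∑ a, Real.exp (β * (y0 a + (y s a0 - y0 a0)))) := by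
              simp only [← hc]
          _ = _ := F_shift hn y0 _ β
    rw [Finset.sum_congr rfl key]
    have h1 : ∑ s, p s * y s a0 = y0 a0 := (hy0 a0).symm
    have h2 : ∑ s, p s * ((∑ a, Real.exp (β * y0 a) * y0 a) / (∑ a, Real.exp (β * y0 a))
        + (y s a0 - y0 a0))
        = (∑ a, Real.exp (β * y0 a) * y0 a) / (∑ a, Real.exp (β * y0 a)) := by
      simp only [mul_add, mul_sub, Finset.sum_add_distrib, Finset.sum_sub_distrib,
        ← Finset.sum_mul, hpsum, h1]
      ring
    rw [h2]
  · -- non-degenerate case: the derivative at `β = 0` is strictly positive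
    push_neg at hA
    obtain ⟨s₁, a₁, hps₁, hne₁⟩ := hA
    have hm : ∀ a b : Fin n, y0 a - y0 b = ∑ s, p s * (y s a - y s b) := by
      intro a b
      rw [hy0 a, hy0 b, ← Finset.sum_sub_distrib]
      exact Finset.sum_congr rfl fun s _ => by ring
    have hVnn : ∀ a b : Fin n,
        0 ≤ ∑ s, p s * (y s a - y s b) ^ 2 - (y0 a - y0 b) ^ 2 := by
      intro a b
      rw [hm a b, ← var_eq p (fun s => y s a - y s b) hpsum]
      exact Finset.sum_nonneg fun s _ => mul_nonneg (hp s) (sq_nonneg _)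
    have hVpos : 0 < ∑ s, p s * (y s a₁ - y s a0) ^ 2 - (y0 a₁ - y0 a0) ^ 2 := by
      rw [hm a₁ a0, ← var_eq p (fun s => y s a₁ - y s a0) hpsum]
      apply Finset.sum_pos' (fun s _ => mul_nonneg (hp s) (sq_nonneg _))
      refine ⟨s₁, Finset.mem_univ _, ?_⟩
      have hd : (y s₁ a₁ - y s₁ a0) - (∑ t, p t * (y t a₁ - y t a0)) ≠ 0 := by
        rw [← hm a₁ a0]
        intro h; apply hne₁; linarith
      have hsq : 0 < ((y s₁ a₁ - y s₁ a0) - ∑ t, p t * (y t a₁ - y t a0)) ^ 2 := by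
        rw [sq]; exact mul_self_pos.mpr hd
      exact mul_pos (lt_of_le_of_ne (hp s₁) (Ne.symm hps₁)) hsq
    have hgap : 0 < ∑ s, p s * qf (y s) - qf y0 := by
      have hqs : ∀ s ∈ univ,
          p s * qf (y s) = (1/2) * (p s * ∑ a, ∑ b, (y s a - y s b) ^ 2) := by
        intro s _; rw [q_pair (y s)]; ring
      have hq0 : qf y0 = (1/2) * ∑ a, ∑ b, (y0 a - y0 b) ^ 2 := by
        have := q_pair y0; linarith
      have swap : ∑ s, p s * ∑ a, ∑ b, (y s a - y s b) ^ 2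
          = ∑ a, ∑ b, ∑ s, p s * (y s a - y s b) ^ 2 := by
        simp only [Finset.mul_sum]
        rw [Finset.sum_comm]
        exact Finset.sum_congr rfl fun a _ => Finset.sum_comm
      have key : ∑ s, p s * qf (y s) - qf y0
          = (1/2) * ∑ a, ∑ b,
              (∑ s, p s * (y s a - y s b) ^ 2 - (y0 a - y0 b) ^ 2) := by
        rw [Finset.sum_congr rfl hqs, ← Finset.mul_sum, swap, hq0, ← mul_sub]
        congr 1
        rw [← Finset.sum_sub_distrib]
        exact Finset.sum_congr rfl fun a _ => (Finset.sum_sub_distrib _ _).symm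
      rw [key]
      apply mul_pos (by norm_num)
      apply Finset.sum_pos' (fun a _ => Finset.sum_nonneg fun b _ => hVnn a b)
      exact ⟨a₁, Finset.mem_univ _,
        Finset.sum_pos' (fun b _ => hVnn a₁ b) ⟨a0, Finset.mem_univ _, hVpos⟩⟩
    set G : ℝ := (∑ s, p s * qf (y s) - qf y0) / (n : ℝ) ^ 2 with hGdef
    have hGpos : 0 < G := div_pos hgap (by positivity)
    set φ : ℝ → ℝ := fun β =>
      (∑ s, p s * ((∑ a, Real.exp (β * y s a) * y s a) / (∑ a, Real.exp (β * y s a))))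
        - (∑ a, Real.exp (β * y0 a) * y0 a) / (∑ a, Real.exp (β * y0 a)) with hφ
    have hd : HasDerivAt φ G 0 := by
      have h1 : HasDerivAt (fun β : ℝ =>
          ∑ s, p s * ((∑ a, Real.exp (β * y s a) * y s a) / (∑ a, Real.exp (β * y s a))))
          (∑ s, p s * (qf (y s) / (n : ℝ) ^ 2)) 0 :=
        HasDerivAt.fun_sum fun s _ => (hasDerivAt_F0 hn (y s)).const_mul (p s)
      have h2 := hasDerivAt_F0 hn y0
      have h3 := h1.sub h2
      convert h3 using 1
      · rfl
      · rfl
      · rfl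
      rw [hGdef, sub_div, Finset.sum_div]
      congr 1
      exact Finset.sum_congr rfl fun s _ => (mul_div_assoc _ _ _)
    have hzero : φ 0 = 0 := by
      have e : ∑ a, y0 a = ∑ s, p s * ∑ a, y s a := by
        have e1 : ∀ a ∈ univ, y0 a = ∑ s, p s * y s a := fun a _ => hy0 a
        rw [Finset.sum_congr rfl e1, Finset.sum_comm]
        exact Finset.sum_congr rfl fun s _ => (Finset.mul_sum _ _ _).symm
      simp only [hφ, zero_mul, Real.exp_zero, one_mul, Finset.sum_const,
        Finset.card_univ, Fintype.card_fin, nsmul_eq_mul, mul_one]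
      rw [sub_eq_zero, e, Finset.sum_div]
      exact Finset.sum_congr rfl fun s _ => (mul_div_assoc _ _ _).symm
    have hslope := hasDerivAt_iff_tendsto_slope.mp hd
    have hev0 : ∀ᶠ x in nhdsWithin 0 {(0:ℝ)}ᶜ, 0 < slope φ 0 x :=
      hslope.eventually (eventually_gt_nhds hGpos)
    have hev : ∀ᶠ x in nhdsWithin (0:ℝ) (Set.Ioi (0:ℝ)), 0 < slope φ 0 x :=
      hev0.filter_mono (nhdsWithin_mono (0:ℝ) fun x hx => (ne_of_gt hx : x ≠ 0))
    obtain ⟨u, hu, hsub⟩ := mem_nhdsGT_iff_exists_Ioo_subset.mp hev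
    refine ⟨u, hu, fun β hβ hβε => ?_⟩
    have hs : 0 < slope φ 0 β := hsub ⟨hβ, hβε⟩
    rw [slope_def_field, hzero, sub_zero, sub_zero] at hs
    have hb : 0 < φ β := by
      have := mul_pos hs hβ
      rwa [div_mul_cancel₀ _ hβ.ne'] at this
    simp only [hφ] at hb
    exact (sub_pos.mp hb).le
end

section
/- In the proof of the stateful-to-stateless equivalence, the key conditional independence holds: given the observation–action history, the environment-state history provides no additional information about the internal (virtual) state history, i.e., P(v_0,...,v_t | π, h^{s,o,a}) = P(v_0,...,v_t | π, h^{o,a}), because every dependence between environment states and internal states is mediated by observations and actions. -/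
open Finset

/-- A finite-horizon POMDP (state, action, and observation spaces, transition
kernel, observation kernel, initial distribution, and reward). -/
structure POMDP where
  S : Type
  A : Type
  O : Type
  [fS : Fintype S]
  [fA : Fintype A]
  [fO : Fintype O]
  init : S → ℝ
  tr : S → A → S → ℝ
  obs : S → O → ℝ
  rew : S → A → ℝ

attribute [instance] POMDP.fS POMDP.fA POMDP.fO

/-- The observation–action part of the first `i` steps of a full
state–observation–action trajectory. -/
def oaHist (M : POMDP) {n : ℕ} (τ : Fin n → M.S × M.O × M.A)
    (i : ℕ) (hi : i ≤ n) : List (M.O × M.A) :=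
  List.ofFn (fun j : Fin i =>
    ((τ ⟨j.1, lt_of_lt_of_le j.2 hi⟩).2.1, (τ ⟨j.1, lt_of_lt_of_le j.2 hi⟩).2.2))

/-- Probability of a full state–observation–action trajectory under an
ordinary history-dependent stochastic policy. -/
noncomputable def trajProb (M : POMDP) (pol : List (M.O × M.A) → M.A → ℝ)
    {n : ℕ} (τ : Fin n → M.S × M.O × M.A) : ℝ :=
  ∏ i : Fin n,
    (if h : i.1 = 0 then M.init (τ i).1
      else M.tr (τ ⟨i.1 - 1, by omega⟩).1 (τ ⟨i.1 - 1, by omega⟩).2.2 (τ i).1) *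
    M.obs (τ i).1 (τ i).2.1 *
    pol (oaHist M τ i.1 (le_of_lt i.2)) (τ i).2.2

/-- Joint probability of a trajectory together with a history of internal
(virtual) states, under a virtual-state policy `vpol` with initial internal
state `v0`: actions and next internal states are sampled jointly from
`vpol v h (a, v')`. -/
noncomputable def vsJointProb (M : POMDP) {V : Type} [Fintype V]
    (vpol : V → List (M.O × M.A) → M.A × V → ℝ) (v0 : V)
    {n : ℕ} (τ : Fin n → M.S × M.O × M.A) (vs : Fin n → V) : ℝ :=
  ∏ i : Fin n,
    (if h : i.1 = 0 then M.init (τ i).1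
      else M.tr (τ ⟨i.1 - 1, by omega⟩).1 (τ ⟨i.1 - 1, by omega⟩).2.2 (τ i).1) *
    M.obs (τ i).1 (τ i).2.1 *
    vpol (if h : i.1 = 0 then v0 else vs ⟨i.1 - 1, by omega⟩)
      (oaHist M τ i.1 (le_of_lt i.2)) ((τ i).2.2, vs i)

/-- Probability of a full trajectory under a virtual-state policy,
marginalizing over the internal-state history. -/
noncomputable def vsTrajProb (M : POMDP) {V : Type} [Fintype V]
    (vpol : V → List (M.O × M.A) → M.A × V → ℝ) (v0 : V)
    {n : ℕ} (τ : Fin n → M.S × M.O × M.A) : ℝ :=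
  ∑ vs : Fin n → V, vsJointProb M vpol v0 τ vs


noncomputable def envProb (M : POMDP) {n : ℕ} (τ : Fin n → M.S × M.O × M.A) : ℝ :=
  ∏ i : Fin n,
    (if h : i.1 = 0 then M.init (τ i).1
      else M.tr (τ ⟨i.1 - 1, by omega⟩).1 (τ ⟨i.1 - 1, by omega⟩).2.2 (τ i).1) *
    M.obs (τ i).1 (τ i).2.1

noncomputable def polProb (M : POMDP) {V : Type} [Fintype V]
    (vpol : V → List (M.O × M.A) → M.A × V → ℝ) (v0 : V)
    {n : ℕ} (τ : Fin n → M.S × M.O × M.A) (vs : Fin n → V) : ℝ :=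
  ∏ i : Fin n,
    vpol (if h : i.1 = 0 then v0 else vs ⟨i.1 - 1, by omega⟩)
      (oaHist M τ i.1 (le_of_lt i.2)) ((τ i).2.2, vs i)

lemma vsJointProb_split (M : POMDP) {V : Type} [Fintype V]
    (vpol : V → List (M.O × M.A) → M.A × V → ℝ) (v0 : V)
    {n : ℕ} (τ : Fin n → M.S × M.O × M.A) (vs : Fin n → V) :
    vsJointProb M vpol v0 τ vs = envProb M τ * polProb M vpol v0 τ vs := by
  unfold vsJointProb envProb polProb
  exact Finset.prod_mul_distrib

lemma oaHist_eq (M : POMDP) {n : ℕ} (τ τ' : Fin n → M.S × M.O × M.A)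
    (h : ∀ i, ((τ' i).2.1, (τ' i).2.2) = ((τ i).2.1, (τ i).2.2))
    (i : ℕ) (hi : i ≤ n) : oaHist M τ' i hi = oaHist M τ i hi := by
  unfold oaHist
  congr 1
  funext j
  exact h _

lemma polProb_eq (M : POMDP) {V : Type} [Fintype V]
    (vpol : V → List (M.O × M.A) → M.A × V → ℝ) (v0 : V)
    {n : ℕ} (τ τ' : Fin n → M.S × M.O × M.A)
    (h : ∀ i, ((τ' i).2.1, (τ' i).2.2) = ((τ i).2.1, (τ i).2.2))
    (vs : Fin n → V) :
    polProb M vpol v0 τ' vs = polProb M vpol v0 τ vs := by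
  unfold polProb
  refine Finset.prod_congr rfl fun i _ => ?_
  have ha : (τ' i).2.2 = (τ i).2.2 := congrArg Prod.snd (h i)
  rw [oaHist_eq M τ τ' h, ha]

lemma envProb_nonneg (M : POMDP)
    (hinitnn : ∀ s, 0 ≤ M.init s) (htrnn : ∀ s a s', 0 ≤ M.tr s a s')
    (hobsnn : ∀ s o, 0 ≤ M.obs s o)
    {n : ℕ} (τ : Fin n → M.S × M.O × M.A) : 0 ≤ envProb M τ := by
  refine Finset.prod_nonneg fun i _ => mul_nonneg ?_ (hobsnn _ _)
  split <;> [exact hinitnn _; exact htrnn _ _ _]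

open Classical in
/-- Key conditional independence in the stateful-to-stateless equivalence:
given the observation–action history, the environment-state history provides no
additional information about the internal (virtual) state history, i.e.,
`P(v₀,…,v_t | π, h^{s,o,a}) = P(v₀,…,v_t | π, h^{o,a})`. -/
theorem internal_states_indep_of_states_given_oa_history
    (M : POMDP) {V : Type} [Fintype V]
    (vpol : V → List (M.O × M.A) → M.A × V → ℝ) (v0 : V)
    (hnn : ∀ v h av, 0 ≤ vpol v h av)
    (hsum : ∀ v h, ∑ av : M.A × V, vpol v h av = 1)
    (hinitnn : ∀ s, 0 ≤ M.init s) (htrnn : ∀ s a s', 0 ≤ M.tr s a s')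
    (hobsnn : ∀ s o, 0 ≤ M.obs s o)
    (n : ℕ) (τ : Fin n → M.S × M.O × M.A) (vs : Fin n → V)
    (hpos : vsTrajProb M vpol v0 τ ≠ 0) :
    vsJointProb M vpol v0 τ vs / vsTrajProb M vpol v0 τ =
      (∑ τ' ∈ Finset.univ.filter
          (fun τ' : Fin n → M.S × M.O × M.A =>
            ∀ i, ((τ' i).2.1, (τ' i).2.2) = ((τ i).2.1, (τ i).2.2)),
          vsJointProb M vpol v0 τ' vs) /
      (∑ τ' ∈ Finset.univ.filter
          (fun τ' : Fin n → M.S × M.O × M.A =>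
            ∀ i, ((τ' i).2.1, (τ' i).2.2) = ((τ i).2.1, (τ i).2.2)),
          vsTrajProb M vpol v0 τ') := by
  classical
  set F := Finset.univ.filter
      (fun τ' : Fin n → M.S × M.O × M.A =>
        ∀ i, ((τ' i).2.1, (τ' i).2.2) = ((τ i).2.1, (τ i).2.2)) with hF
  have hτF : τ ∈ F := by simp [hF]
  set P : ℝ := polProb M vpol v0 τ vs with hP
  set Q : ℝ := ∑ vs' : Fin n → V, polProb M vpol v0 τ vs' with hQ
  set E : ℝ := envProb M τ with hE
  set SE : ℝ := ∑ τ' ∈ F, envProb M τ' with hSE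
  have htraj : ∀ τ'' : Fin n → M.S × M.O × M.A,
      vsTrajProb M vpol v0 τ'' = envProb M τ'' * ∑ vs', polProb M vpol v0 τ'' vs' := by
    intro τ''
    unfold vsTrajProb
    rw [Finset.mul_sum]
    exact Finset.sum_congr rfl fun vs' _ => vsJointProb_split ..
  have hEQ : vsTrajProb M vpol v0 τ = E * Q := htraj τ
  have hEne : E ≠ 0 := by
    intro h0; apply hpos; rw [hEQ, h0, zero_mul]
  have hQne : Q ≠ 0 := by
    intro h0; apply hpos; rw [hEQ, h0, mul_zero]
  have hEpos : 0 < E :=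
    lt_of_le_of_ne (envProb_nonneg M hinitnn htrnn hobsnn τ) (Ne.symm hEne)
  have hSEne : SE ≠ 0 := by
    have : E ≤ SE :=
      Finset.single_le_sum (f := fun τ' => envProb M τ')
        (fun τ' _ => envProb_nonneg M hinitnn htrnn hobsnn τ') hτF
    exact ne_of_gt (lt_of_lt_of_le hEpos this)
  have hnum : (∑ τ' ∈ F, vsJointProb M vpol v0 τ' vs) = SE * P := by
    rw [hSE, Finset.sum_mul]
    refine Finset.sum_congr rfl fun τ' hmem => ?_
    have hm : ∀ i, ((τ' i).2.1, (τ' i).2.2) = ((τ i).2.1, (τ i).2.2) := by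
      simpa [hF] using hmem
    rw [vsJointProb_split, polProb_eq M vpol v0 τ τ' hm]
  have hden : (∑ τ' ∈ F, vsTrajProb M vpol v0 τ') = SE * Q := by
    rw [hSE, Finset.sum_mul]
    refine Finset.sum_congr rfl fun τ' hmem => ?_
    have hm : ∀ i, ((τ' i).2.1, (τ' i).2.2) = ((τ i).2.1, (τ i).2.2) := by
      simpa [hF] using hmem
    rw [htraj τ']
    congr 1
    exact Finset.sum_congr rfl fun vs' _ => polProb_eq M vpol v0 τ τ' hm vs'
  rw [hEQ, vsJointProb_split, ← hE, ← hP, hnum, hden,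
    mul_div_mul_left _ _ hEne, mul_div_mul_left _ _ hSEne]
end
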